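/- Chan's z-order comparison algorithm is correct: for distinct points p, q ∈ ℕ^d (coordinates given as w-bit natural numbers), let i be the index maximizing ⌊log₂(p_i XOR q_i)⌋ (taking the smallest such index among ties as produced by the left-to-right scan that updates i = j only when ⌊log₂(p_i XOR q_i)⌋ < ⌊log₂(p_j XOR q_j)⌋). Then σ(p) < σ(q) if and only if p_i < q_i, where σ denotes the bit-interleaving (shuffle) map. -/

import Mathlib

/-- The shuffle (bit interleaving) of a point of `ℕ^d` with `w`-bit coordinates:
the natural number whose binary digits are, from most significant bit level `w-1`
down to level `0`, the corresponding bits of coordinates `0, 1, ..., d-1` in order. -/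
def natShuffle (d w : ℕ) (p : Fin d → ℕ) : ℕ :=
  ∑ j ∈ Finset.range w, ∑ k : Fin d,
    if (p k).testBit j then 2 ^ (j * d + (d - 1 - k.val)) else 0

/-- Chan's left-to-right scan: starting from index `0`, update the current index `i`
to `j` exactly when the most significant set bit of `p i XOR q i` is strictly lower
than that of `p j XOR q j` (`Nat.size a = ⌊log₂ a⌋ + 1`, with `Nat.size 0 = 0`). -/
def zIdx (d : ℕ) [NeZero d] (p q : Fin d → ℕ) : Fin d :=
  (List.finRange d).foldl
    (fun i j => if Nat.size (p i ^^^ q i) < Nat.size (p j ^^^ q j) then j else i)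
    ⟨0, NeZero.pos d⟩

/-! ### Auxiliary lemmas -/

/-- Sum of powers of two picked by a boolean predicate. -/
def bitSum (f : ℕ → Bool) (n : ℕ) : ℕ := ∑ m ∈ Finset.range n, if f m then 2 ^ m else 0

lemma bitSum_lt (f : ℕ → Bool) (n : ℕ) : bitSum f n < 2 ^ n := by
  induction n with
  | zero => simp [bitSum]
  | succ n ih =>
    have : bitSum f (n + 1) = bitSum f n + (if f n then 2 ^ n else 0) := by
      simp [bitSum, Finset.sum_range_succ]
    rw [this, pow_succ]
    split <;> omega

lemma testBit_bitSum (f : ℕ → Bool) (n t : ℕ) :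
    (bitSum f n).testBit t = (f t && decide (t < n)) := by
  induction n with
  | zero => simp [bitSum]
  | succ n ih =>
    have h1 : bitSum f (n + 1) = 2 ^ n * (if f n then 1 else 0) + bitSum f n := by
      simp [bitSum, Finset.sum_range_succ]
      split <;> simp [Nat.add_comm]
    rw [h1, Nat.testBit_two_pow_mul_add _ (bitSum_lt f n)]
    by_cases ht : t < n
    · rw [if_pos ht, ih]
      simp [ht, Nat.lt_succ_of_lt ht]
    · rw [if_neg ht]
      by_cases hte : t = n
      · subst hte
        split <;> simp_all
      · have h2 : ¬ t < n + 1 := by omega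
        have h3 : 0 < t - n := by omega
        have : (if f n then 1 else 0 : ℕ).testBit (t - n) = false := by
          apply Nat.testBit_lt_two_pow
          have : (1 : ℕ) < 2 ^ (t - n) := by
            calc (1:ℕ) < 2 ^ 1 := by norm_num
            _ ≤ 2 ^ (t - n) := Nat.pow_le_pow_right (by norm_num) h3
          split <;> omega
        simp [this, h2]

lemma natShuffle_eq (d w : ℕ) (hd : 0 < d) (p : Fin d → ℕ) :
    natShuffle d w p
      = bitSum (fun m => (p ⟨d - 1 - m % d, by omega⟩).testBit (m / d)) (w * d) := by
  unfold natShuffle bitSum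
  rw [← Finset.sum_product']
  refine Finset.sum_nbij' (i := fun jk => jk.1 * d + (d - 1 - jk.2.val))
    (j := fun m => (m / d, ⟨d - 1 - m % d, by omega⟩)) ?_ ?_ ?_ ?_ ?_
  · rintro ⟨j, k⟩ hm
    simp only [Finset.mem_product, Finset.mem_range] at hm ⊢
    have hk := k.isLt
    have h1 : (j + 1) * d ≤ w * d := Nat.mul_le_mul_right d (by omega)
    have h2 : (j + 1) * d = j * d + d := by ring
    omega
  · intro m hm
    simp only [Finset.mem_range, Finset.mem_product, Finset.mem_univ, and_true] at hm ⊢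
    exact Nat.div_lt_iff_lt_mul hd |>.mpr (by omega)
  · rintro ⟨j, k⟩ hm
    have hk : k.val < d := k.isLt
    have hdiv : (j * d + (d - 1 - k.val)) / d = j := by
      rw [Nat.mul_comm, Nat.mul_add_div hd, Nat.div_eq_of_lt (by omega)]
      omega
    have hmod : (j * d + (d - 1 - k.val)) % d = d - 1 - k.val := by
      rw [Nat.mul_comm, Nat.mul_add_mod]
      exact Nat.mod_eq_of_lt (by omega)
    have hkk : (⟨d - 1 - (j * d + (d - 1 - k.val)) % d, by omega⟩ : Fin d) = k := by
      apply Fin.ext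
      show d - 1 - (j * d + (d - 1 - k.val)) % d = k.val
      rw [hmod]
      omega
    simp only [Prod.mk.injEq]
    exact ⟨hdiv, hkk⟩
  · intro m hm
    simp only [Finset.mem_range] at hm
    have h1 : m % d < d := Nat.mod_lt _ hd
    have h3 : d - 1 - (d - 1 - m % d) = m % d := by omega
    show m / d * d + (d - 1 - (d - 1 - m % d)) = m
    rw [h3, Nat.mul_comm]
    exact Nat.div_add_mod m d
  · rintro ⟨j, k⟩ hm
    have hk : k.val < d := k.isLt
    have hdiv : (j * d + (d - 1 - k.val)) / d = j := by
      rw [Nat.mul_comm, Nat.mul_add_div hd, Nat.div_eq_of_lt (by omega)]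
      omega
    have hmod : (j * d + (d - 1 - k.val)) % d = d - 1 - k.val := by
      rw [Nat.mul_comm, Nat.mul_add_mod]
      exact Nat.mod_eq_of_lt (by omega)
    have hkk : (⟨d - 1 - (j * d + (d - 1 - k.val)) % d, by omega⟩ : Fin d) = k := by
      apply Fin.ext
      show d - 1 - (j * d + (d - 1 - k.val)) % d = k.val
      rw [hmod]
      omega
    simp only [hdiv, hkk]

lemma testBit_size_sub_one {x : ℕ} (hx : x ≠ 0) :
    x.testBit (Nat.size x - 1) = true := by
  have hs : 1 ≤ Nat.size x := by
    rcases Nat.eq_zero_or_pos (Nat.size x) with h | h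
    · exact absurd (Nat.size_eq_zero.mp h) hx
    · exact h
  have hlo : 2 ^ (Nat.size x - 1) ≤ x := Nat.lt_size.mp (by omega)
  have hhi : x < 2 ^ Nat.size x := Nat.lt_size_self x
  have hdiv : x / 2 ^ (Nat.size x - 1) = 1 := by
    apply Nat.div_eq_of_lt_le (by omega)
    have : 2 ^ Nat.size x = 2 ^ (Nat.size x - 1) * 2 := by
      rw [← pow_succ]
      congr 1
      omega
    omega
  rw [Nat.testBit_eq_decide_div_mod_eq, hdiv]
  simp

lemma lt_iff_testBit_of {a b m : ℕ} (hne : a.testBit m ≠ b.testBit m)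
    (hhi : ∀ t, m < t → a.testBit t = b.testBit t) :
    a < b ↔ b.testBit m = true := by
  constructor
  · intro hab
    by_contra hb
    have hb' : b.testBit m = false := by simpa using hb
    have ha' : a.testBit m = true := by
      cases h : a.testBit m
      · exact absurd (h.trans hb'.symm) hne
      · rfl
    have : b < a := Nat.lt_of_testBit m hb' ha' (fun j hj => (hhi j hj).symm)
    omega
  · intro hb
    have ha' : a.testBit m = false := by
      cases h : a.testBit m
      · rfl
      · exact absurd (h.trans hb.symm) hne
    exact Nat.lt_of_testBit m ha' hb hhi

lemma testBit_eq_of_xor_false {a b i : ℕ} (h : (a ^^^ b).testBit i = false) :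
    a.testBit i = b.testBit i := by
  rw [Nat.testBit_xor] at h
  cases ha : a.testBit i <;> cases hb : b.testBit i <;> rw [ha, hb] at h <;> simp at h ⊢

lemma zIdx_spec {d : ℕ} [NeZero d] (p q : Fin d → ℕ) :
    (∀ k, Nat.size (p k ^^^ q k) ≤ Nat.size (p (zIdx d p q) ^^^ q (zIdx d p q))) ∧
    (∀ k : Fin d, k < zIdx d p q →
      Nat.size (p k ^^^ q k) < Nat.size (p (zIdx d p q) ^^^ q (zIdx d p q))) := by
  have hd : 0 < d := NeZero.pos d
  set v : Fin d → ℕ := fun k => Nat.size (p k ^^^ q k) with hv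
  set step : Fin d → Fin d → Fin d := fun i j => if v i < v j then j else i with hstep
  set F : ℕ → Fin d := fun n => ((List.finRange d).take n).foldl step ⟨0, hd⟩ with hF
  have hFsucc : ∀ n, (hn : n < d) → F (n + 1) = step (F n) ⟨n, hn⟩ := by
    intro n hn
    have hn' : n < (List.finRange d).length := by simpa using hn
    have hget : (List.finRange d)[n]? = some ⟨n, hn⟩ := by
      rw [List.getElem?_eq_getElem hn']
      simp
    simp only [hF, List.take_succ, hget, Option.toList_some, List.foldl_append,
      List.foldl_cons, List.foldl_nil]
  have key : ∀ n, 1 ≤ n → n ≤ d →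
      (F n).val < n ∧ (∀ k : Fin d, k.val < n → v k ≤ v (F n)) ∧
      (∀ k : Fin d, k.val < (F n).val → v k < v (F n)) := by
    intro n hn1 hnd
    induction n with
    | zero => omega
    | succ n ih =>
      rcases Nat.eq_zero_or_pos n with h0 | hpos
      · subst h0
        have h1 : F 1 = ⟨0, hd⟩ := by
          rw [hFsucc 0 hd]
          simp [hF, hstep]
        rw [h1]
        refine ⟨by simp, ?_, ?_⟩
        · intro k hk
          have hk0 : k = ⟨0, hd⟩ := Fin.ext (by show k.val = 0; omega)
          rw [hk0]
        · intro k hk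
          simp at hk
      · obtain ⟨hlt, hle, hstrict⟩ := ih hpos (by omega)
        have hnd' : n < d := by omega
        rw [hFsucc n hnd']
        simp only [hstep]
        by_cases hc : v (F n) < v ⟨n, hnd'⟩
        · rw [if_pos hc]
          refine ⟨by simp, ?_, ?_⟩
          · intro k hk
            rcases Nat.lt_or_ge k.val n with h | h
            · exact le_of_lt (lt_of_le_of_lt (hle k h) hc)
            · have hkn : k = ⟨n, hnd'⟩ := Fin.ext (by simp; omega)
              rw [hkn]
          · intro k hk
            simp only [Fin.val_mk] at hk
            exact lt_of_le_of_lt (hle k hk) hc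
        · rw [if_neg hc]
          refine ⟨by omega, ?_, hstrict⟩
          intro k hk
          rcases Nat.lt_or_ge k.val n with h | h
          · exact hle k h
          · have hkn : k = ⟨n, hnd'⟩ := Fin.ext (by simp; omega)
            rw [hkn]
            exact Nat.le_of_not_lt hc
  have hzF : zIdx d p q = F d := by
    rw [hF, hstep, hv]
    simp only [zIdx]
    rw [List.take_of_length_le (by simp)]
  obtain ⟨_, hle, hstrict⟩ := key d hd le_rfl
  rw [hzF]
  exact ⟨fun k => hle k k.isLt, fun k hk => hstrict k hk⟩

/-- Correctness of Chan's z-order comparison algorithm: for distinct `w`-bit points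
`p ≠ q`, with `i` the index produced by the scan (the first index maximizing the
most significant differing bit), `σ(p) < σ(q)` iff `p i < q i`. -/
theorem stmt3 (d w : ℕ) [NeZero d] (p q : Fin d → ℕ)
    (hp : ∀ k, p k < 2 ^ w) (hq : ∀ k, q k < 2 ^ w) (hpq : p ≠ q) :
    natShuffle d w p < natShuffle d w q ↔ p (zIdx d p q) < q (zIdx d p q) := by
  have hd : 0 < d := NeZero.pos d
  set i := zIdx d p q with hi
  obtain ⟨hmax, hstrict⟩ := zIdx_spec p q
  have hxi : p i ^^^ q i ≠ 0 := by
    intro h0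
    apply hpq
    funext k
    have h1 := hmax k
    rw [← hi, h0, Nat.size_zero, Nat.le_zero, Nat.size_eq_zero] at h1
    exact xor_eq_zero_iff.mp h1
  set s := Nat.size (p i ^^^ q i) with hs
  have hs1 : 1 ≤ s := by
    rcases Nat.eq_zero_or_pos s with h | h
    · exact absurd (Nat.size_eq_zero.mp h) hxi
    · exact h
  have hsw : s ≤ w := Nat.size_le.mpr (Nat.xor_lt_two_pow (hp i) (hq i))
  set jb := s - 1 with hjb
  set M := jb * d + (d - 1 - i.val) with hM
  have hival : i.val < d := i.isLt
  have hMlt : M < w * d := by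
    have h1 : (jb + 1) * d ≤ w * d := Nat.mul_le_mul_right d (by omega)
    have h2 : (jb + 1) * d = jb * d + d := by ring
    omega
  have hbit : ∀ r : Fin d → ℕ, ∀ t,
      (natShuffle d w r).testBit t
        = ((r ⟨d - 1 - t % d, by omega⟩).testBit (t / d) && decide (t < w * d)) := by
    intro r t
    rw [natShuffle_eq d w hd r, testBit_bitSum]
  have hMdiv : M / d = jb := by
    rw [hM, Nat.mul_comm, Nat.mul_add_div hd, Nat.div_eq_of_lt (by omega)]
    omega
  have hMmod : M % d = d - 1 - i.val := by
    rw [hM, Nat.mul_comm, Nat.mul_add_mod]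
    exact Nat.mod_eq_of_lt (by omega)
  have hMfin : (⟨d - 1 - M % d, by omega⟩ : Fin d) = i := by
    apply Fin.ext
    show d - 1 - M % d = i.val
    rw [hMmod]
    omega
  have hbitM : ∀ r : Fin d → ℕ,
      (natShuffle d w r).testBit M = (r i).testBit jb := by
    intro r
    rw [hbit r M, hMfin, hMdiv]
    simp [hMlt]
  have hxbit : (p i ^^^ q i).testBit jb = true := by
    have := testBit_size_sub_one hxi
    rwa [← hs, ← hjb] at this
  have hdiff : (p i).testBit jb ≠ (q i).testBit jb := by
    rw [Nat.testBit_xor] at hxbit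
    intro h
    rw [h] at hxbit
    simp at hxbit
  have hhiS : ∀ t, M < t → (natShuffle d w p).testBit t = (natShuffle d w q).testBit t := by
    intro t ht
    rw [hbit p t, hbit q t]
    by_cases htw : t < w * d
    · rw [decide_eq_true htw]
      simp only [Bool.and_true]
      set k : Fin d := ⟨d - 1 - t % d, by omega⟩ with hk
      have htmod : t % d < d := Nat.mod_lt _ hd
      have hteq : t = t / d * d + t % d := by
        rw [Nat.mul_comm]
        exact (Nat.div_add_mod t d).symm
      have hxf : (p k ^^^ q k).testBit (t / d) = false := by
        rcases Nat.lt_or_ge jb (t / d) with hcase | hcase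
        · apply Nat.testBit_lt_two_pow
          calc p k ^^^ q k < 2 ^ Nat.size (p k ^^^ q k) := Nat.lt_size_self _
            _ ≤ 2 ^ (t / d) := Nat.pow_le_pow_right (by norm_num) (by
                have h4 := hmax k
                omega)
        · rcases Nat.eq_or_lt_of_le hcase with hcase2 | hcase2
          · rw [hcase2] at hteq
            have hki : k < i := by
              rw [Fin.lt_def]
              show d - 1 - t % d < i.val
              omega
            apply Nat.testBit_lt_two_pow
            calc p k ^^^ q k < 2 ^ Nat.size (p k ^^^ q k) := Nat.lt_size_self _
              _ ≤ 2 ^ (t / d) := Nat.pow_le_pow_right (by norm_num) (by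
                  have h4 := hstrict k hki
                  omega)
          · exfalso
            have h5 : (t / d + 1) * d ≤ jb * d := Nat.mul_le_mul_right d (by omega)
            have h6 : (t / d + 1) * d = t / d * d + d := by ring
            omega
      exact testBit_eq_of_xor_false hxf
    · simp [htw]
  have hbitsM : (natShuffle d w p).testBit M ≠ (natShuffle d w q).testBit M := by
    rw [hbitM p, hbitM q]
    exact hdiff
  have hL := lt_iff_testBit_of hbitsM hhiS
  have hhiC : ∀ t, jb < t → (p i).testBit t = (q i).testBit t := by
    intro t ht
    have hxf : (p i ^^^ q i).testBit t = false := by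
      apply Nat.testBit_lt_two_pow
      calc p i ^^^ q i < 2 ^ s := Nat.lt_size_self _
        _ ≤ 2 ^ t := Nat.pow_le_pow_right (by norm_num) (by omega)
    exact testBit_eq_of_xor_false hxf
  have hR := lt_iff_testBit_of hdiff hhiC
  rw [hL, hR, hbitM q]
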